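/- Let λ₁,…,λₙ be real numbers, not all zero, let 0 < r < 1, ξ_r := ∑_{k=0}^∞ r^k/(k+2), and let y₁,…,yₙ be i.i.d. standard Gaussians. Then for any t with 0 < t ≤ r/(2·maxᵢ|λᵢ|), E[exp(t·∑ᵢ λᵢ(yᵢ² - 1))] ≤ exp(2t²·ξ_r·∑ᵢ λᵢ²). -/

import Mathlib

open MeasureTheory ProbabilityTheory
open scoped ENNReal NNReal

noncomputable def xi (r : ℝ) : ℝ := ∑' k : ℕ, r ^ k / ((k : ℝ) + 2)

lemma pi_integral (n : ℕ) (f : Fin n → ℝ → ℝ) :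
    ∫ x, ∏ i, f i (x i) ∂(Measure.pi fun _ : Fin n => gaussianReal 0 1)
      = ∏ i, ∫ x, f i x ∂(gaussianReal 0 1) := by
  letI : MeasureSpace ℝ := ⟨gaussianReal 0 1⟩
  haveI : SigmaFinite (volume : Measure ℝ) :=
    (inferInstance : SigmaFinite (gaussianReal 0 1))
  exact MeasureTheory.integral_fintype_prod_eq_prod f

lemma gauss_exp_sq {s : ℝ} (hs : s < 1/2) :
    ∫ x, Real.exp (s * x ^ 2) ∂(gaussianReal 0 1) = (Real.sqrt (1 - 2*s))⁻¹ := by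
  rw [gaussianReal_of_var_ne_zero 0 one_ne_zero]
  have hmeas : Measurable fun x => (gaussianPDFReal 0 1 x).toNNReal :=
    (measurable_gaussianPDFReal 0 1).real_toNNReal
  rw [show gaussianPDF 0 1 = fun x => ((fun x => (gaussianPDFReal 0 1 x).toNNReal) x : ℝ≥0∞) from rfl]
  rw [integral_withDensity_eq_integral_smul hmeas]
  have h2 : (0:ℝ) < 1/2 - s := by linarith
  have heq : (fun x => ((gaussianPDFReal 0 1 x).toNNReal : ℝ≥0) • Real.exp (s * x^2))
      = fun x => (Real.sqrt (2*Real.pi))⁻¹ * Real.exp (-(1/2 - s) * x^2) := by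
    funext x
    rw [NNReal.smul_def, Real.coe_toNNReal _ (gaussianPDFReal_nonneg 0 1 x)]
    simp only [gaussianPDFReal, NNReal.coe_one, mul_one, sub_zero, smul_eq_mul]
    rw [mul_assoc, ← Real.exp_add]
    ring_nf
  rw [heq, MeasureTheory.integral_const_mul, integral_gaussian]
  rw [div_eq_mul_inv Real.pi, Real.sqrt_mul Real.pi_pos.le, Real.sqrt_inv,
    Real.sqrt_mul (by norm_num : (0:ℝ) ≤ 2) Real.pi]
  have hπ : Real.sqrt Real.pi ≠ 0 := by positivity
  have h12 : Real.sqrt (1 - 2*s) = Real.sqrt 2 * Real.sqrt (1/2 - s) := by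
    rw [← Real.sqrt_mul (by norm_num : (0:ℝ) ≤ 2)]
    ring_nf
  rw [h12]
  have h2' : Real.sqrt 2 ≠ 0 := by positivity
  rw [mul_inv, mul_inv, mul_assoc, ← mul_assoc (Real.sqrt Real.pi)⁻¹,
    inv_mul_cancel₀ hπ, one_mul]

lemma factor_bound {s r : ℝ} (hr0 : 0 < r) (hr1 : r < 1) (hsr : |2*s| ≤ r) :
    Real.exp (-s) * (Real.sqrt (1 - 2*s))⁻¹ ≤ Real.exp (2 * s^2 * xi r) := by
  have habs : |2*s| < 1 := lt_of_le_of_lt hsr hr1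
  have h1 : 0 < 1 - 2*s := by
    rcases abs_lt.mp habs with ⟨h', h''⟩; linarith
  have hsqrt : (Real.sqrt (1 - 2*s))⁻¹ = Real.exp (-(Real.log (1 - 2*s)/2)) := by
    rw [← Real.log_sqrt h1.le, Real.exp_neg, Real.exp_log (Real.sqrt_pos.mpr h1)]
  rw [hsqrt, ← Real.exp_add]
  apply Real.exp_le_exp.mpr
  -- series expansion
  have hlog : HasSum (fun n : ℕ => (2*s)^(n+1)/((n:ℝ)+1)) (-Real.log (1-2*s)) :=
    Real.hasSum_pow_div_log_of_abs_lt_one habs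
  have hshift : HasSum (fun n : ℕ => (2*s)^(n+1+1)/(((n+1:ℕ):ℝ)+1)) (-Real.log (1-2*s) - 2*s) := by
    refine (hasSum_nat_add_iff (f := fun n : ℕ => (2*s)^(n+1)/((n:ℝ)+1)) 1).mpr ?_
    convert hlog using 1
    · rfl
    rw [Finset.sum_range_one]; norm_num
  have hS : HasSum (fun n : ℕ => (2*s)^2 * ((2*s)^n/((n:ℝ)+2))) (-Real.log (1-2*s) - 2*s) := by
    convert hshift using 2 with n
    push_cast
    ring
  -- summability and comparison
  have hg : Summable (fun n : ℕ => (2*s)^n/((n:ℝ)+2)) := by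
    apply Summable.of_abs
    apply Summable.of_nonneg_of_le (fun n => abs_nonneg _) (fun n => ?_)
      (summable_geometric_of_lt_one hr0.le hr1)
    rw [abs_div, abs_pow, abs_of_pos (by positivity : (0:ℝ) < (n:ℝ)+2)]
    calc |2*s|^n / ((n:ℝ)+2) ≤ r^n / ((n:ℝ)+2) := by
          apply div_le_div_of_nonneg_right ?_ ?_
          · exact pow_le_pow_left₀ (abs_nonneg _) hsr n
          · positivity
      _ ≤ r^n := by
          rw [div_le_iff₀ (by positivity)]
          nlinarith [pow_nonneg hr0.le n]
  have hh : Summable (fun n : ℕ => r^n/((n:ℝ)+2)) := by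
    apply Summable.of_nonneg_of_le (fun n => by positivity) (fun n => ?_)
      (summable_geometric_of_lt_one hr0.le hr1)
    rw [div_le_iff₀ (by positivity)]
    nlinarith [pow_nonneg hr0.le n]
  have hle : (∑' n : ℕ, (2*s)^n/((n:ℝ)+2)) ≤ xi r := by
    refine Summable.tsum_le_tsum (fun n => ?_) hg hh
    apply div_le_div_of_nonneg_right ?_ (by positivity)
    calc (2*s)^n ≤ |(2*s)^n| := le_abs_self _
      _ = |2*s|^n := abs_pow _ _
      _ ≤ r^n := pow_le_pow_left₀ (abs_nonneg _) hsr n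
  have heq : -Real.log (1-2*s) - 2*s = (2*s)^2 * ∑' n : ℕ, (2*s)^n/((n:ℝ)+2) := by
    rw [← tsum_mul_left, hS.tsum_eq]
  have hs2 : 0 ≤ s^2 := sq_nonneg s
  nlinarith [mul_le_mul_of_nonneg_left hle (by positivity : (0:ℝ) ≤ 4*s^2)]

theorem mgf_sum_bound (n : ℕ) (lam : Fin n → ℝ) (hlam : lam ≠ 0)
    (r : ℝ) (hr : r ∈ Set.Ioo (0 : ℝ) 1) (t : ℝ) (ht : 0 < t)
    (ht2 : t ≤ r / (2 * ⨆ i, |lam i|)) :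
    ∫ y, Real.exp (t * ∑ i, lam i * ((y i) ^ 2 - 1))
        ∂(Measure.pi fun _ : Fin n => gaussianReal 0 1)
      ≤ Real.exp (2 * t ^ 2 * xi r * ∑ i, lam i ^ 2) := by
  obtain ⟨i₀, hi₀⟩ : ∃ i, lam i ≠ 0 := Function.ne_iff.mp hlam
  obtain ⟨hr0, hr1⟩ := hr
  have hbdd : BddAbove (Set.range fun i => |lam i|) := Set.Finite.bddAbove (Set.finite_range _)
  have hM : 0 < ⨆ i, |lam i| := lt_of_lt_of_le (abs_pos.mpr hi₀) (le_ciSup hbdd i₀)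
  have hkey : ∀ i, |2 * (t * lam i)| ≤ r := by
    intro i
    have h1 : |lam i| ≤ ⨆ i, |lam i| := le_ciSup hbdd i
    have h2 : t * (2 * ⨆ i, |lam i|) ≤ r := (le_div_iff₀ (by positivity)).mp ht2
    rw [abs_mul, abs_mul, abs_of_pos ht, abs_two]
    nlinarith
  have hlt : ∀ i, t * lam i < 1/2 := fun i => by
    have h3 : |2*(t*lam i)| < 1 := lt_of_le_of_lt (hkey i) hr1
    rcases abs_lt.mp h3 with ⟨_, h⟩; linarith
  calc ∫ y, Real.exp (t * ∑ i, lam i * ((y i)^2 - 1))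
          ∂(Measure.pi fun _ : Fin n => gaussianReal 0 1)
      = ∏ i, ∫ x, Real.exp (t * lam i * (x^2 - 1)) ∂(gaussianReal 0 1) := by
        rw [← pi_integral]
        congr 1; funext y
        rw [Finset.mul_sum, Real.exp_sum]
        exact Finset.prod_congr rfl fun i _ => by rw [mul_assoc]
    _ ≤ ∏ i, Real.exp (2*(t*lam i)^2 * xi r) := by
        apply Finset.prod_le_prod
        · intro i _; exact integral_nonneg fun x => (Real.exp_pos _).le
        · intro i _
          have hexp : ∀ x:ℝ, Real.exp (t*lam i*(x^2-1))
              = Real.exp (-(t*lam i)) * Real.exp ((t*lam i)*x^2) := fun x => by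
            rw [← Real.exp_add]; ring_nf
          have hfac : ∫ x, Real.exp (t*lam i*(x^2-1)) ∂(gaussianReal 0 1)
              = Real.exp (-(t*lam i)) * (Real.sqrt (1 - 2*(t*lam i)))⁻¹ := by
            simp_rw [hexp]
            rw [MeasureTheory.integral_const_mul, gauss_exp_sq (hlt i)]
          rw [hfac]
          exact factor_bound hr0 hr1 (hkey i)
    _ = Real.exp (2*t^2*xi r*∑ i, lam i^2) := by
        rw [← Real.exp_sum]
        congr 1
        rw [Finset.mul_sum]
        exact Finset.sum_congr rfl fun i _ => by ring
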